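/- arXiv:1708.04075 — 4 statements merged into one kernel-verified Lean document; each statement's English description precedes it below -/
import Mathlib

section
/- Let f ∈ ℝ[X₁,…,Xₙ] be a nonzero polynomial with f(0) = 0 and ∇f(0) = 0. Then every neighborhood of the origin in ℝⁿ contains infinitely many points of Γ_ℝ(f) \ Crit_ℝ(f); in particular 0 is an accumulation point of Γ_ℝ(f) \ Crit_ℝ(f). -/
open MvPolynomial Metric Set

noncomputable section

/-- The gradient of a real polynomial `f`, as a map on `ℝⁿ`. -/
def grad {n : ℕ} (f : MvPolynomial (Fin n) ℝ) (x : EuclideanSpace ℝ (Fin n)) :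
    EuclideanSpace ℝ (Fin n) :=
  WithLp.toLp 2 (fun i => eval (fun j => x j) (pderiv i f))

/-- Evaluation of a polynomial as a function on `ℝⁿ`. -/
def evalP {n : ℕ} (f : MvPolynomial (Fin n) ℝ) (x : EuclideanSpace ℝ (Fin n)) : ℝ :=
  eval (fun j => x j) f

/-- The tangency variety `Γ_ℝ(f) = {x | ∃ λ, ∇f(x) = λ x}`. -/
def Gamma {n : ℕ} (f : MvPolynomial (Fin n) ℝ) : Set (EuclideanSpace ℝ (Fin n)) :=
  {x | ∃ l : ℝ, grad f x = l • x}

/-- The set of real critical points `Crit_ℝ(f) = {x | ∇f(x) = 0}`. -/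
def Crit {n : ℕ} (f : MvPolynomial (Fin n) ℝ) : Set (EuclideanSpace ℝ (Fin n)) :=
  {x | grad f x = 0}

def Dp {n : ℕ} (f : MvPolynomial (Fin n) ℝ) (x : EuclideanSpace ℝ (Fin n)) :
    EuclideanSpace ℝ (Fin n) →L[ℝ] ℝ :=
  ∑ i, grad f x i • (EuclideanSpace.proj i : EuclideanSpace ℝ (Fin n) →L[ℝ] ℝ)

lemma Dp_apply {n : ℕ} (f : MvPolynomial (Fin n) ℝ) (x v : EuclideanSpace ℝ (Fin n)) :
    Dp f x v = ∑ i, grad f x i * v i := by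
  simp [Dp]

lemma Dp_single {n : ℕ} (f : MvPolynomial (Fin n) ℝ) (x : EuclideanSpace ℝ (Fin n)) (i : Fin n) :
    Dp f x (EuclideanSpace.single i 1) = grad f x i := by
  simp [Dp_apply, EuclideanSpace.single_apply]

lemma hasStrictFDerivAt_evalP {n : ℕ} (f : MvPolynomial (Fin n) ℝ)
    (x : EuclideanSpace ℝ (Fin n)) : HasStrictFDerivAt (evalP f) (Dp f x) x := by
  induction f using MvPolynomial.induction_on with
  | C a =>
      have h : (evalP (C a : MvPolynomial (Fin n) ℝ)) = fun _ => a := by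
        funext y; simp [evalP]
      have h2 : Dp (C a : MvPolynomial (Fin n) ℝ) x = 0 := by
        simp [Dp, grad, pderiv_C]
      rw [h, h2]; exact hasStrictFDerivAt_const a x
  | add p q hp hq =>
      have h : (evalP (p + q)) = fun y => evalP p y + evalP q y := by
        funext y; simp [evalP]
      have h2 : Dp (p + q) x = Dp p x + Dp q x := by
        simp [Dp, grad, map_add, add_smul, Finset.sum_add_distrib]
      rw [h, h2]; exact hp.add hq
  | mul_X p i hp =>
      classical
      have h : (evalP (p * X i)) = fun y : EuclideanSpace ℝ (Fin n) => evalP p y * y i := by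
        funext y; simp [evalP]
      have hXi : HasStrictFDerivAt (fun y : EuclideanSpace ℝ (Fin n) => y i)
          (EuclideanSpace.proj i : EuclideanSpace ℝ (Fin n) →L[ℝ] ℝ) x :=
        (EuclideanSpace.proj (𝕜 := ℝ) i).hasStrictFDerivAt
      have key := hp.mul hXi
      have h2 : Dp (p * X i) x =
          evalP p x • (EuclideanSpace.proj i : EuclideanSpace ℝ (Fin n) →L[ℝ] ℝ) + x i • Dp p x := by
        ext v
        simp only [Dp, grad, pderiv_mul, ContinuousLinearMap.sum_apply,
          ContinuousLinearMap.smul_apply, ContinuousLinearMap.add_apply,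
          PiLp.proj_apply, map_add, map_mul, smul_eq_mul, add_mul]
        rw [Finset.sum_add_distrib]
        have e1 : ∀ j, eval (fun j => x j) (pderiv j p) * eval (fun j => x j) (X i) * v j
            = x i * (eval (fun j => x j) (pderiv j p) * v j) := by
          intro j; simp [eval_X]; ring
        have e2 : ∀ j, eval (fun j => x j) p * eval (fun j => x j) (pderiv j (X i)) * v j
            = (if j = i then evalP p x * v j else 0) := by
          intro j
          by_cases hj : j = i
          · subst hj; simp [pderiv_X_self, evalP]
          · simp [hj, pderiv_X_of_ne (Ne.symm hj)]
        rw [Finset.sum_congr rfl (fun j _ => e1 j), Finset.sum_congr rfl (fun j _ => e2 j)]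
        rw [Finset.sum_ite_eq' Finset.univ i (fun j => evalP p x * v j)]
        simp [Finset.mul_sum]
        ring
      rw [h, h2]; exact key

def sq' (n : ℕ) : MvPolynomial (Fin n) ℝ := ∑ i, (X i)^2

lemma evalP_sq' {n : ℕ} (x : EuclideanSpace ℝ (Fin n)) : evalP (sq' n) x = ‖x‖^2 := by
  have h : ‖x‖ = Real.sqrt (∑ i, ‖x i‖^2) := EuclideanSpace.norm_eq x
  rw [h, Real.sq_sqrt (by positivity)]
  simp [sq' , evalP, sq_abs]

lemma grad_sq' {n : ℕ} (x : EuclideanSpace ℝ (Fin n)) (i : Fin n) :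
    grad (sq' n) x i = 2 * x i := by
  classical
  simp only [grad, sq', map_sum]
  have : ∀ j : Fin n, eval (fun j => x j) (pderiv i ((X j : MvPolynomial (Fin n) ℝ)^2))
      = if j = i then 2 * x i else 0 := by
    intro j
    rw [pderiv_pow]
    by_cases hj : j = i
    · subst hj; simp [pderiv_X_self]
    · simp [pderiv_X_of_ne (Ne.symm hj), hj]
  rw [Finset.sum_congr rfl (fun j _ => this j)]
  simp

lemma constantCoeff_pderiv {n : ℕ} (i : Fin n) (f : MvPolynomial (Fin n) ℝ) :
    constantCoeff (pderiv i f) = coeff (Finsupp.single i 1) f := by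
  classical
  induction f using MvPolynomial.induction_on with
  | C a => simp [pderiv_C, coeff_C, eq_comm, Finsupp.single_eq_zero]
  | add p q hp hq => simp [map_add, hp, hq]
  | mul_X p j hp =>
      rw [pderiv_mul, map_add, map_mul, map_mul, coeff_mul_X']
      by_cases hj : j = i
      · subst hj
        simp only [pderiv_X_self, mul_one, map_one, one_mul]
        rw [if_pos]
        · simp [constantCoeff_X, congrFun constantCoeff_eq p]
        · simp [Finsupp.support_single_ne_zero]
      · rw [pderiv_X_of_ne hj, if_neg]
        · simp [constantCoeff_X]
        · simp [Finsupp.support_single_ne_zero]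
          exact hj

lemma abs_coord_le_norm {n : ℕ} (x : EuclideanSpace ℝ (Fin n)) (i : Fin n) :
    |x i| ≤ ‖x‖ := by
  have h : ‖x‖ = Real.sqrt (∑ j, ‖x j‖^2) := EuclideanSpace.norm_eq x
  rw [h]
  have : |x i|^2 ≤ ∑ j, ‖x j‖^2 := by
    have := Finset.single_le_sum (f := fun j => ‖x j‖^2) (fun j _ => by positivity)
      (Finset.mem_univ i)
    simpa [Real.norm_eq_abs] using this
  calc |x i| = Real.sqrt (|x i|^2) := by rw [Real.sqrt_sq (abs_nonneg _)]
  _ ≤ _ := Real.sqrt_le_sqrt this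

lemma evalP_quadratic_bound {n : ℕ} (f : MvPolynomial (Fin n) ℝ)
    (hf0 : evalP f 0 = 0) (hgrad : grad f 0 = 0) :
    ∃ C : ℝ, 0 ≤ C ∧ ∀ x : EuclideanSpace ℝ (Fin n), ‖x‖ ≤ 1 → |evalP f x| ≤ C * ‖x‖^2 := by
  classical
  have hzero : (fun j => (0 : EuclideanSpace ℝ (Fin n)) j) = (0 : Fin n → ℝ) := rfl
  have hc0 : coeff 0 f = 0 := by
    have : constantCoeff f = 0 := by
      rw [← MvPolynomial.eval_zero]
      simpa [evalP, hzero] using hf0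
    exact this
  have hc1 : ∀ i, coeff (Finsupp.single i 1) f = 0 := by
    intro i
    have : grad f 0 i = 0 := by rw [hgrad]; rfl
    rw [grad] at this
    rw [← constantCoeff_pderiv]
    rw [← MvPolynomial.eval_zero]
    simpa [hzero] using this
  -- every monomial in the support has total degree ≥ 2
  have hdeg : ∀ α ∈ f.support, 2 ≤ ∑ i, α i := by
    intro α hα
    by_contra hlt
    push_neg at hlt
    interval_cases h : (∑ i, α i)
    · have : α = 0 := by
        ext i
        exact Finset.sum_eq_zero_iff.mp h i (Finset.mem_univ i)
      rw [this] at hα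
      exact (MvPolynomial.mem_support_iff.mp hα) hc0
    · -- total degree 1 : α = single i 1
      have hex : ∃ i, α i ≠ 0 := by
        by_contra hno
        push_neg at hno
        simp [Finset.sum_congr rfl fun i _ => hno i] at h
      obtain ⟨i, hi⟩ := hex
      have hle : α i ≤ ∑ j, α j :=
        Finset.single_le_sum (fun j _ => Nat.zero_le _) (Finset.mem_univ i)
      have hαi : α i = 1 := by omega
      have : α = Finsupp.single i 1 := by
        ext j
        by_cases hj : j = i
        · subst hj; simp [hαi]
        · have : ∑ k, α k = α i + ∑ k ∈ Finset.univ.erase i, α k := by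
            rw [Finset.add_sum_erase _ _ (Finset.mem_univ i)]
          have hj0 : α j = 0 := by
            have hjmem : j ∈ Finset.univ.erase i := Finset.mem_erase.mpr ⟨hj, Finset.mem_univ j⟩
            have h2 : α j ≤ ∑ k ∈ Finset.univ.erase i, α k := by
              simpa using Finset.single_le_sum (f := fun k => α k)
                (fun k _ => Nat.zero_le _) hjmem
            omega
          rw [hj0, Finsupp.single_apply, if_neg (Ne.symm hj)]
      rw [this] at hα
      exact (MvPolynomial.mem_support_iff.mp hα) (hc1 i)
  refine ⟨∑ α ∈ f.support, |coeff α f|, Finset.sum_nonneg fun _ _ => abs_nonneg _, ?_⟩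
  intro x hx
  have heval : evalP f x = ∑ α ∈ f.support, coeff α f * ∏ i, x i ^ α i := by
    rw [evalP, eval_eq']
  rw [heval, Finset.sum_mul]
  refine (Finset.abs_sum_le_sum_abs _ _).trans (Finset.sum_le_sum fun α hα => ?_)
  rw [abs_mul]
  have h1 : |∏ i, x i ^ α i| ≤ ‖x‖ ^ (∑ i, α i) := by
    rw [Finset.abs_prod, ← Finset.prod_pow_eq_pow_sum]
    refine Finset.prod_le_prod (fun i _ => by positivity) fun i _ => ?_
    rw [abs_pow]
    exact pow_le_pow_left₀ (abs_nonneg _) (abs_coord_le_norm x i) _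
  have h2 : ‖x‖ ^ (∑ i, α i) ≤ ‖x‖ ^ 2 :=
    pow_le_pow_of_le_one (norm_nonneg _) hx (hdeg α hα)
  exact mul_le_mul_of_nonneg_left (h1.trans h2) (abs_nonneg _)

lemma exists_nonvanishing_near_zero {n : ℕ} (f : MvPolynomial (Fin n) ℝ) (hf : f ≠ 0) :
    ∀ δ : ℝ, 0 < δ → ∃ p : EuclideanSpace ℝ (Fin n), ‖p‖ < δ ∧ evalP f p ≠ 0 := by
  intro δ hδ
  -- a point where f doesn't vanish
  have hy : ∃ y : Fin n → ℝ, eval y f ≠ 0 := by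
    by_contra hall
    push_neg at hall
    exact hf (MvPolynomial.funext (fun x => by simp [hall x]))
  obtain ⟨y, hy⟩ := hy
  -- the univariate polynomial t ↦ f (t • y)
  set P : Polynomial ℝ :=
    MvPolynomial.eval₂ (Polynomial.C) (fun i => Polynomial.C (y i) * Polynomial.X) f with hP
  have hPt : ∀ t : ℝ, Polynomial.eval t P = eval (fun i => y i * t) f := by
    intro t
    rw [hP]
    rw [show (Polynomial.eval t : Polynomial ℝ → ℝ) (MvPolynomial.eval₂ Polynomial.C
        (fun i => Polynomial.C (y i) * Polynomial.X) f) =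
      (Polynomial.evalRingHom t) (MvPolynomial.eval₂ Polynomial.C
        (fun i => Polynomial.C (y i) * Polynomial.X) f) from rfl]
    rw [MvPolynomial.eval₂_comp_left]
    simp [MvPolynomial.eval₂_eq, MvPolynomial.eval_eq]
  have hPne : P ≠ 0 := by
    intro h0
    apply hy
    have := hPt 1
    rw [h0] at this
    simp at this
    simpa using this.symm
  have hroots : {t : ℝ | Polynomial.IsRoot P t}.Finite := Polynomial.finite_setOf_isRoot hPne
  -- choose small t avoiding the roots
  have hIoo : (Set.Ioo (0:ℝ) (δ / (‖(WithLp.equiv 2 _).symm y‖ + 1))).Infinite := by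
    apply Set.Ioo_infinite
    positivity
  obtain ⟨t, ht, htroot⟩ := (hIoo.diff hroots).nonempty
  refine ⟨t • (WithLp.equiv 2 (Fin n → ℝ)).symm y, ?_, ?_⟩
  · rw [norm_smul]
    have h1 : |t| = t := abs_of_pos ht.1
    calc ‖t‖ * ‖(WithLp.equiv 2 (Fin n → ℝ)).symm y‖
        ≤ ‖t‖ * (‖(WithLp.equiv 2 (Fin n → ℝ)).symm y‖ + 1) := by
          apply mul_le_mul_of_nonneg_left (by linarith [norm_nonneg ((WithLp.equiv 2 (Fin n → ℝ)).symm y)]) (norm_nonneg t)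
      _ < δ := by
          rw [Real.norm_eq_abs, h1]
          rw [← lt_div_iff₀ (by positivity)]
          exact ht.2
  · have : evalP f (t • (WithLp.equiv 2 (Fin n → ℝ)).symm y) = eval (fun i => y i * t) f := by
      rw [evalP]
      have harg : (fun j => (t • (WithLp.equiv 2 (Fin n → ℝ)).symm y) j) = fun i => y i * t := by
        funext i
        show t * y i = y i * t
        ring
      rw [harg]
    rw [this, ← hPt]
    exact htroot


section Key
variable {n : ℕ}

set_option maxHeartbeats 1000000 in
lemma key_lemma (f : MvPolynomial (Fin n) ℝ) (hf : f ≠ 0)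
    (hf0 : evalP f 0 = 0) (hgrad : grad f 0 = 0) :
    ∀ ε : ℝ, 0 < ε → ε ≤ 1 →
      ∃ x : EuclideanSpace ℝ (Fin n), x ≠ 0 ∧ ‖x‖ ≤ ε ∧
        (∃ l : ℝ, grad f x = l • x) ∧ grad f x ≠ 0 := by
  classical
  intro ε hε hε1
  obtain ⟨C, hC0, hC⟩ := evalP_quadratic_bound f hf0 hgrad
  obtain ⟨p, hpε, hfp⟩ := exists_nonvanishing_near_zero f hf ε hε
  have hp0 : p ≠ 0 := by
    intro h; rw [h] at hfp; exact hfp hf0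
  set F : EuclideanSpace ℝ (Fin n) → ℝ := fun x => (evalP f x)^2 with hFdef
  set G : EuclideanSpace ℝ (Fin n) → ℝ := fun x => evalP (sq' n) x with hGdef
  have hGval : ∀ x : EuclideanSpace ℝ (Fin n), G x = ‖x‖^2 := fun x => evalP_sq' x
  have hGpos : ∀ x : EuclideanSpace ℝ (Fin n), x ≠ 0 → 0 < G x := by
    intro x hx
    rw [hGval]
    have : ‖x‖ ≠ 0 := fun h => hx (norm_eq_zero.mp h)
    positivity
  set ψ : EuclideanSpace ℝ (Fin n) → ℝ := fun x => if x = 0 then 0 else F x / G x with hψdef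
  have hψnonneg : ∀ x, 0 ≤ ψ x := by
    intro x
    rw [hψdef]
    by_cases hx : x = 0
    · simp [hx]
    · simp only [if_neg hx]
      exact div_nonneg (sq_nonneg _) (hGpos x hx).le
  have hFcont : Continuous F := by
    apply Continuous.pow
    exact continuous_iff_continuousAt.mpr fun x =>
      (hasStrictFDerivAt_evalP f x).continuousAt
  have hGcont : Continuous G :=
    continuous_iff_continuousAt.mpr fun x => (hasStrictFDerivAt_evalP (sq' n) x).continuousAt
  -- continuity of ψ on the closed ball
  have hψcont : ContinuousOn ψ (closedBall (0:EuclideanSpace ℝ (Fin n)) ε) := by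
    intro x hx
    by_cases hx0 : x = 0
    · subst hx0
      have hbound : ∀ᶠ y in nhds (0:EuclideanSpace ℝ (Fin n)), ψ y ≤ C^2 * ‖y‖^2 := by
        filter_upwards [Metric.ball_mem_nhds (0:EuclideanSpace ℝ (Fin n)) one_pos] with y hy
        by_cases hy0 : y = 0
        · subst hy0; simp [hψdef]; try positivity
        · rw [hψdef]
          simp only [if_neg hy0]
          rw [div_le_iff₀ (hGpos y hy0)]
          have hy1 : ‖y‖ ≤ 1 := (mem_ball_zero_iff.mp hy).le
          have h1 : |evalP f y| ≤ C * ‖y‖^2 := hC y hy1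
          have h2 : F y ≤ (C * ‖y‖^2)^2 := by
            calc F y = |evalP f y|^2 := (sq_abs _).symm
            _ ≤ (C * ‖y‖^2)^2 := pow_le_pow_left₀ (abs_nonneg _) h1 2
          refine h2.trans (le_of_eq ?_)
          rw [hGval]; ring
      have hg : Filter.Tendsto (fun y : EuclideanSpace ℝ (Fin n) => C^2 * ‖y‖^2)
          (nhds 0) (nhds 0) := by
        have hcont : Continuous (fun y : EuclideanSpace ℝ (Fin n) => C^2 * ‖y‖^2) :=
          continuous_const.mul (continuous_norm.pow 2)
        have := hcont.tendsto 0
        simpa using this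
      have htend : Filter.Tendsto ψ (nhds 0) (nhds 0) :=
        squeeze_zero' (Filter.Eventually.of_forall hψnonneg) hbound hg
      have hψ0 : ψ 0 = 0 := by simp [hψdef]
      have : ContinuousAt ψ 0 := by
        unfold ContinuousAt
        rw [hψ0]
        exact htend
      exact this.continuousWithinAt
    · have hne : {y : EuclideanSpace ℝ (Fin n) | y ≠ 0} ∈ nhds x :=
        isOpen_compl_singleton.mem_nhds hx0
      have hca : ContinuousAt (fun y => F y / G y) x :=
        (hFcont.continuousAt).div (hGcont.continuousAt) (ne_of_gt (hGpos x hx0))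
      have heq : ψ =ᶠ[nhds x] fun y => F y / G y := by
        filter_upwards [hne] with y hy
        rw [hψdef]; simp [hy]
      exact (hca.congr heq.symm).continuousWithinAt
  -- maximize ψ
  have hcompact : IsCompact (closedBall (0:EuclideanSpace ℝ (Fin n)) ε) :=
    isCompact_closedBall _ _
  obtain ⟨z, hzmem, hzmax⟩ := hcompact.exists_isMaxOn
    ⟨0, mem_closedBall_self hε.le⟩ hψcont
  have hpmem : p ∈ closedBall (0:EuclideanSpace ℝ (Fin n)) ε :=
    mem_closedBall_zero_iff.mpr hpε.le
  have hψp : 0 < ψ p := by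
    rw [hψdef]
    simp only [if_neg hp0]
    apply div_pos _ (hGpos p hp0)
    calc (0:ℝ) < |evalP f p|^2 := pow_pos (abs_pos.mpr hfp) 2
    _ = F p := sq_abs _
  have hT : 0 < ψ z := lt_of_lt_of_le hψp (hzmax hpmem)
  have hz0 : z ≠ 0 := by
    intro h
    rw [hψdef] at hT
    rw [h] at hT
    simp at hT
  have hψz : ψ z = F z / G z := by rw [hψdef]; simp [hz0]
  have hGz : 0 < G z := hGpos z hz0
  have hFzeq : F z = ψ z * G z := by rw [hψz]; field_simp
  have hFz : 0 < F z := hFzeq ▸ mul_pos hT hGz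
  have hfz : evalP f z ≠ 0 := by
    intro h
    rw [hFdef] at hFz
    simp only [h] at hFz
    simp at hFz
  have hznorm : ‖z‖ ≤ ε := mem_closedBall_zero_iff.mp hzmem
  set T : ℝ := ψ z with hTdef
  -- derivative of F
  have hDF : ∀ w : EuclideanSpace ℝ (Fin n),
      HasStrictFDerivAt F ((2 * evalP f w) • Dp f w) w := by
    intro w
    have h := (hasStrictFDerivAt_evalP f w).mul (hasStrictFDerivAt_evalP f w)
    have h1 : F = fun y => evalP f y * evalP f y := by
      funext y; rw [hFdef]; ring
    have h2 : (2 * evalP f w) • Dp f w = evalP f w • Dp f w + evalP f w • Dp f w := by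
      rw [← add_smul]; congr 1; ring
    rw [h1, h2]; exact h
  rcases eq_or_lt_of_le hznorm with hbd | hint
  · -- boundary case : ‖z‖ = ε
    have hbd' : ‖z‖ = ε := hbd
    -- (1) the gradient is nonzero, via the radial derivative
    have hφ : ∀ r : ℝ, HasDerivAt (fun t : ℝ => evalP f (t • z)) (Dp f (r • z) z) r := by
      intro r
      have hline : HasDerivAt (fun t : ℝ => t • z) ((1:ℝ) • z) r :=
        (hasDerivAt_id r).smul_const z
      have := (hasStrictFDerivAt_evalP f (r • z)).hasFDerivAt.comp_hasDerivAt r hline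
      rw [one_smul] at this
      exact this
    set φ : ℝ → ℝ := fun t => evalP f (t • z) with hφdef
    set h : ℝ → ℝ := fun r => (φ r)^2 / (r^2 * ε^2) with hhdef
    have hheq : ∀ r : ℝ, 0 < r → r ≤ 1 → h r = ψ (r • z) := by
      intro r hr hr1
      have hrz : r • z ≠ 0 := smul_ne_zero (ne_of_gt hr) hz0
      rw [hψdef, hhdef]
      simp only [if_neg hrz]
      congr 1
      rw [hGval, norm_smul, Real.norm_eq_abs, abs_of_pos hr, mul_pow, hbd']
    have hh1 : h 1 = T := by
      rw [hheq 1 one_pos le_rfl, one_smul, hTdef]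
    have hmax : ∀ r ∈ Set.Ioo (0:ℝ) 1, h r ≤ h 1 := by
      intro r hr
      rw [hh1, hheq r hr.1 hr.2.le]
      apply hzmax
      rw [mem_closedBall_zero_iff, norm_smul, Real.norm_eq_abs, abs_of_pos hr.1, hbd']
      nlinarith [hr.1, hr.2, hε]
    -- derivative of h at 1
    have hφ1 : HasDerivAt φ (Dp f z z) 1 := by
      have := hφ 1
      rw [one_smul] at this
      exact this
    have hnum : HasDerivAt (fun r => (φ r)^2) (2 * φ 1 * Dp f z z) 1 := by
      have := hφ1.pow 2
      have h2 : 2 * φ 1 * Dp f z z = ((2:ℕ):ℝ) * φ 1 ^ (2 - 1) * Dp f z z := by norm_num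
      rw [h2]
      exact this
    have hden : HasDerivAt (fun r : ℝ => r^2 * ε^2) (2 * ε^2) 1 := by
      have := (hasDerivAt_pow 2 (1:ℝ)).mul_const (ε^2)
      simpa using this
    have hden1 : (1:ℝ)^2 * ε^2 ≠ 0 := by positivity
    have hh' : HasDerivAt h
        ((2 * φ 1 * Dp f z z * ((1:ℝ)^2 * ε^2) - (φ 1)^2 * (2 * ε^2)) / ((1:ℝ)^2 * ε^2)^2) 1 :=
      hnum.div hden hden1
    -- the derivative at the right endpoint of the max is ≥ 0
    have hslope : Filter.Tendsto (slope h 1) (nhdsWithin 1 (Set.Iio 1)) (nhds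
        ((2 * φ 1 * Dp f z z * ((1:ℝ)^2 * ε^2) - (φ 1)^2 * (2 * ε^2)) / ((1:ℝ)^2 * ε^2)^2)) := by
      apply (hasDerivAt_iff_tendsto_slope.mp hh').mono_left
      apply nhdsWithin_mono
      intro r hr
      exact ne_of_lt hr
    have hd0 : 0 ≤ (2 * φ 1 * Dp f z z * ((1:ℝ)^2 * ε^2) - (φ 1)^2 * (2 * ε^2)) / ((1:ℝ)^2 * ε^2)^2 := by
      apply ge_of_tendsto hslope
      have hm1 : Set.Ioi (0:ℝ) ∈ nhdsWithin (1:ℝ) (Set.Iio 1) :=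
        mem_nhdsWithin_of_mem_nhds (Ioi_mem_nhds one_pos)
      have hm2 : Set.Iio (1:ℝ) ∈ nhdsWithin (1:ℝ) (Set.Iio 1) := self_mem_nhdsWithin
      have hmem : Set.Ioo (0:ℝ) 1 ∈ nhdsWithin (1:ℝ) (Set.Iio 1) := by
        have := Filter.inter_mem hm1 hm2
        simpa [Set.Ioi_inter_Iio] using this
      filter_upwards [hmem] with r hr
      have hr1 : r - 1 < 0 := by linarith [hr.2]
      have hnm : h r - h 1 ≤ 0 := by linarith [hmax r hr]
      have hsl : slope h 1 r = (h r - h 1) / (r - 1) := by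
        rw [slope_def_field]
      rw [hsl, div_nonneg_iff]
      right
      exact ⟨hnm, hr1.le⟩
    have hε2 : (0:ℝ) < ε^2 := by positivity
    have hden2 : (0:ℝ) < (((1:ℝ)^2 * ε^2)^2) := by positivity
    have hnum0 : 0 ≤ 2 * φ 1 * Dp f z z * ((1:ℝ)^2 * ε^2) - (φ 1)^2 * (2 * ε^2) := by
      have hmul := mul_nonneg hd0 hden2.le
      rwa [div_mul_cancel₀ _ (ne_of_gt hden2)] at hmul
    have hφ1z : φ 1 = evalP f z := by rw [hφdef]; simp
    have hkey : (φ 1)^2 ≤ φ 1 * Dp f z z := by nlinarith [hnum0, hε2]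
    have hφ1pos : 0 < (φ 1)^2 := by
      have : φ 1 ≠ 0 := by rw [hφ1z]; exact hfz
      positivity
    have hgradne : grad f z ≠ 0 := by
      intro hg
      have hDz : Dp f z z = 0 := by
        rw [Dp_apply]
        apply Finset.sum_eq_zero
        intro i _
        rw [show grad f z i = 0 by rw [hg]; simp]
        ring
      rw [hDz, mul_zero] at hkey
      exact absurd (lt_of_lt_of_le hφ1pos hkey) (lt_irrefl 0)
    -- (2) tangency via Lagrange multipliers
    have hS : ∀ y : EuclideanSpace ℝ (Fin n), evalP (sq' n) y = evalP (sq' n) z → ‖y‖ = ε := by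
      intro y hy
      have h1 : ‖y‖^2 = ‖z‖^2 := by
        rw [← evalP_sq', ← evalP_sq', hy]
      rw [← Real.sqrt_sq (norm_nonneg y), h1, Real.sqrt_sq (norm_nonneg z), hbd']
    have hGz' : G z = ε^2 := by rw [hGval, hbd']
    have hFmax : IsMaxOn F {y : EuclideanSpace ℝ (Fin n) |
        evalP (sq' n) y = evalP (sq' n) z} z := by
      rw [isMaxOn_iff]
      intro y hy
      have hyn : ‖y‖ = ε := hS y hy
      have hy0 : y ≠ 0 := by
        intro h
        rw [h, norm_zero] at hyn
        exact absurd hyn.symm (ne_of_gt hε)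
      have hymem : y ∈ closedBall (0:EuclideanSpace ℝ (Fin n)) ε :=
        mem_closedBall_zero_iff.mpr hyn.le
      have h1 : ψ y ≤ T := hzmax hymem
      have hψy : ψ y = F y / G y := by rw [hψdef]; simp [hy0]
      have hGy : G y = ε^2 := by rw [hGval, hyn]
      have hFyeq : F y = ψ y * G y := by
        rw [hψy, div_mul_cancel₀ _ (ne_of_gt (hGpos y hy0))]
      calc F y = ψ y * G y := hFyeq
      _ ≤ T * ε^2 := by
          rw [hGy]
          exact mul_le_mul_of_nonneg_right h1 hε2.le
      _ = F z := by rw [← hGz', hTdef, ← hFzeq]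
    have hextr : IsLocalExtrOn F {y : EuclideanSpace ℝ (Fin n) |
        evalP (sq' n) y = evalP (sq' n) z} z := Or.inr hFmax.localize
    obtain ⟨a, b, hab, heqab⟩ := hextr.exists_multipliers_of_hasStrictFDerivAt_1d
      (hasStrictFDerivAt_evalP (sq' n) z) (hDF z)
    have hco : ∀ i, a * (2 * z i) + b * (2 * evalP f z * grad f z i) = 0 := by
      intro i
      have hi := congrArg (fun (L : EuclideanSpace ℝ (Fin n) →L[ℝ] ℝ) =>
        L (EuclideanSpace.single i 1)) heqab
      simp only [ContinuousLinearMap.zero_apply, ContinuousLinearMap.add_apply,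
        ContinuousLinearMap.smul_apply, Dp_single, smul_eq_mul] at hi
      rw [grad_sq'] at hi
      linear_combination hi
    have hbne : b ≠ 0 := by
      intro hb0
      have ha : a ≠ 0 := by
        intro ha0
        apply hab
        rw [ha0, hb0]
        rfl
      apply hz0
      ext i
      show z i = 0
      have h5 := hco i
      rw [hb0] at h5
      have h6 : a * (2 * z i) = 0 := by linarith [h5]
      rcases mul_eq_zero.mp h6 with h7 | h7
      · exact absurd h7 ha
      · linarith [h7]
    set c : ℝ := -a / (b * evalP f z) with hcdef
    have hceq : grad f z = c • z := by
      ext i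
      show grad f z i = c * z i
      have h4 : grad f z i * (b * evalP f z) = -a * z i := by
        linear_combination (hco i) / 2
      rw [hcdef, div_mul_eq_mul_div, eq_div_iff (mul_ne_zero hbne hfz)]
      linear_combination h4
    exact ⟨z, hz0, hznorm, ⟨c, hceq⟩, hgradne⟩
  · -- interior case
    have hnhds : closedBall (0:EuclideanSpace ℝ (Fin n)) ε ∈ nhds z :=
      Filter.mem_of_superset (isOpen_ball.mem_nhds (mem_ball_zero_iff.mpr hint))
        ball_subset_closedBall
    -- W = F - T • G has a local max at z
    set W : EuclideanSpace ℝ (Fin n) → ℝ := fun y => F y - T * G y with hWdef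
    have hWz : W z = 0 := by
      rw [hWdef]
      simp only []
      rw [hFzeq, hTdef]
      ring
    have hWmax : IsLocalMax W z := by
      have : ∀ y ∈ closedBall (0:EuclideanSpace ℝ (Fin n)) ε, W y ≤ W z := by
        intro y hy
        rw [hWz, hWdef]
        simp only []
        by_cases hy0 : y = 0
        · subst hy0
          have : F 0 = 0 := by rw [hFdef]; simp [hf0]
          rw [this, hGval]
          simp
        · have hψy : ψ y = F y / G y := by rw [hψdef]; simp [hy0]
          have h1 : ψ y ≤ T := hzmax hy
          rw [hψy] at h1
          have h2 := hGpos y hy0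
          rw [div_le_iff₀ h2] at h1
          linarith
      exact IsMaxOn.isLocalMax (fun y hy => by simpa [hWz] using this y hy) hnhds
    have hDW : HasFDerivAt W ((2 * evalP f z) • Dp f z - T • Dp (sq' n) z) z := by
      exact ((hDF z).hasFDerivAt.sub
        (((hasStrictFDerivAt_evalP (sq' n) z).hasFDerivAt).const_smul T))
    have hD0 := hWmax.hasFDerivAt_eq_zero hDW
    set c : ℝ := T / evalP f z with hcdef
    have hceq : grad f z = c • z := by
      ext i
      have hi := congrArg (fun (L : EuclideanSpace ℝ (Fin n) →L[ℝ] ℝ) =>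
        L (EuclideanSpace.single i 1)) hD0
      simp only [ContinuousLinearMap.zero_apply, ContinuousLinearMap.sub_apply,
        ContinuousLinearMap.smul_apply, Dp_single, smul_eq_mul] at hi
      rw [grad_sq'] at hi
      have hi2 : 2 * evalP f z * grad f z i - T * (2 * z i) = 0 := by linear_combination hi
      show grad f z i = c * z i
      rw [hcdef, div_mul_eq_mul_div, eq_div_iff hfz]
      linear_combination hi2 / 2
    refine ⟨z, hz0, hznorm, ⟨c, hceq⟩, ?_⟩
    rw [hceq]
    intro hcz
    rcases smul_eq_zero.mp hcz with hc | hzz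
    · rw [hcdef] at hc
      rw [div_eq_zero_iff] at hc
      rcases hc with hc | hc
      · rw [hTdef] at hc; exact absurd hc (ne_of_gt hT)
      · exact hfz hc
    · exact hz0 hzz

end Key

/-- If `f` is a nonzero polynomial with `f(0) = 0` and `∇f(0) = 0`, then every
neighborhood of the origin contains infinitely many points of `Γ_ℝ(f) \ Crit_ℝ(f)`;
in particular `0` is an accumulation point of `Γ_ℝ(f) \ Crit_ℝ(f)`. -/
theorem stmt3 (n : ℕ) (f : MvPolynomial (Fin n) ℝ) (hf : f ≠ 0)
    (hf0 : evalP f 0 = 0) (hgrad : grad f 0 = 0) :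
    (∀ U ∈ nhds (0 : EuclideanSpace ℝ (Fin n)), (U ∩ (Gamma f \ Crit f)).Infinite) ∧
    (0 : EuclideanSpace ℝ (Fin n)) ∈ closure ((Gamma f \ Crit f) \ {0}) := by
  have hpt : ∀ U ∈ nhds (0 : EuclideanSpace ℝ (Fin n)), ∀ δ : ℝ, 0 < δ →
      ∃ x : EuclideanSpace ℝ (Fin n),
        x ∈ U ∩ (Gamma f \ Crit f) ∧ x ≠ 0 ∧ ‖x‖ ≤ δ := by
    intro U hU δ hδ
    obtain ⟨ε, hε, hball⟩ := Metric.mem_nhds_iff.mp hU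
    set ε' : ℝ := min (ε/2) (min δ 1) with hε'def
    have hε'pos : 0 < ε' := by
      apply lt_min (by linarith)
      exact lt_min hδ one_pos
    have hε'le1 : ε' ≤ 1 := le_trans (min_le_right _ _) (min_le_right _ _)
    obtain ⟨x, hx0, hxnorm, ⟨l, hl⟩, hgne⟩ :=
      key_lemma f hf hf0 hgrad ε' hε'pos hε'le1
    refine ⟨x, ⟨?_, ?_, ?_⟩, hx0, ?_⟩
    · apply hball
      rw [Metric.mem_ball, dist_zero_right]
      calc ‖x‖ ≤ ε' := hxnorm
      _ ≤ ε/2 := min_le_left _ _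
      _ < ε := by linarith
    · exact ⟨l, hl⟩
    · intro hc
      exact hgne hc
    · exact le_trans hxnorm (le_trans (min_le_right _ _) (min_le_left _ _))
  constructor
  · intro U hU
    by_contra hfin
    rw [Set.not_infinite] at hfin
    set S : Set (EuclideanSpace ℝ (Fin n)) := U ∩ (Gamma f \ Crit f) with hSdef
    have hfin' : (S \ {0}).Finite := hfin.diff
    have hne : (S \ {0}).Nonempty := by
      obtain ⟨x, hxS, hx0, _⟩ := hpt U hU 1 one_pos
      exact ⟨x, hxS, hx0⟩
    obtain ⟨x₀, hx₀, hminx⟩ := Set.exists_min_image (S \ {0}) norm hfin' hne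
    have hx₀pos : 0 < ‖x₀‖ := by
      rw [norm_pos_iff]
      exact hx₀.2
    obtain ⟨x, hxS, hx0, hxle⟩ := hpt U hU (‖x₀‖/2) (by linarith)
    have := hminx x ⟨hxS, hx0⟩
    linarith
  · rw [mem_closure_iff_nhds]
    intro U hU
    obtain ⟨x, hxS, hx0, _⟩ := hpt U hU 1 one_pos
    exact ⟨x, hxS.1, ⟨hxS.2, hx0⟩⟩
end
end

section
/- Let f ∈ ℝ[X₁,…,Xₙ] be a polynomial with f(0) = 0 and ∇f(0) = 0. Suppose 𝒭 > 0 satisfies Condition 1 and 0 < R < 𝒭. Then Γ_ℝ(f) ∩ B_R is connected. -/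
open MvPolynomial Metric Set

noncomputable section

/-- Condition 1 for the radius `sR`: for every nonzero `u ∈ Γ_ℝ(f)` with `‖u‖ < sR`,
there exist a neighborhood `O ⊆ B_sR` of `u`, reals `a < t̄ < b` and a differentiable
map `φ : (a,b) → ℝⁿ` with `φ((a,b)) = Γ_ℝ(f) ∩ O`, `φ(t̄) = u`, and the derivative of
`t ↦ Σᵢ φᵢ(t)² = ‖φ(t)‖²` at `t̄` nonzero. -/
def Cond1 {n : ℕ} (f : MvPolynomial (Fin n) ℝ) (sR : ℝ) : Prop :=
  ∀ u ∈ Gamma f, u ≠ 0 → ‖u‖ < sR →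
    ∃ (O : Set (EuclideanSpace ℝ (Fin n))) (a b tb : ℝ)
      (φ : ℝ → EuclideanSpace ℝ (Fin n)),
      O ∈ nhds u ∧ O ⊆ closedBall (0 : EuclideanSpace ℝ (Fin n)) sR ∧
      a < tb ∧ tb < b ∧
      (∀ t ∈ Ioo a b, DifferentiableAt ℝ φ t) ∧
      φ '' Ioo a b = Gamma f ∩ O ∧ φ tb = u ∧
      deriv (fun t => ‖φ t‖ ^ 2) tb ≠ 0

lemma grad_continuous {n : ℕ} (f : MvPolynomial (Fin n) ℝ) : Continuous (grad f) := by
  apply (PiLp.continuous_toLp 2 _).comp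
  apply continuous_pi
  intro i
  exact (MvPolynomial.continuous_eval (pderiv i f)).comp
    (continuous_pi fun j => PiLp.continuous_apply 2 _ j)

lemma gamma_eq {n : ℕ} (f : MvPolynomial (Fin n) ℝ) (hgrad : grad f 0 = 0) :
    Gamma f = {x : EuclideanSpace ℝ (Fin n) |
      (‖x‖ ^ 2) • grad f x = (inner ℝ (grad f x) x : ℝ) • x} := by
  ext x
  constructor
  · rintro ⟨l, hl⟩
    simp only [mem_setOf_eq, hl, real_inner_smul_left, real_inner_self_eq_norm_sq, smul_smul]
    ring_nf
  · intro hx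
    by_cases hx0 : x = 0
    · exact ⟨0, by simp [hx0, hgrad]⟩
    · have hn : (‖x‖ : ℝ) ^ 2 ≠ 0 := pow_ne_zero 2 (norm_ne_zero_iff.mpr hx0)
      refine ⟨(inner ℝ (grad f x) x : ℝ) / ‖x‖ ^ 2, ?_⟩
      have h2 : grad f x = (‖x‖ ^ 2)⁻¹ • ((inner ℝ (grad f x) x : ℝ) • x) := by
        rw [← hx, smul_smul, inv_mul_cancel₀ hn, one_smul]
      rw [div_eq_inv_mul, ← smul_smul]
      exact h2

lemma gamma_closed {n : ℕ} (f : MvPolynomial (Fin n) ℝ) (hgrad : grad f 0 = 0) :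
    IsClosed (Gamma f) := by
  rw [gamma_eq f hgrad]
  exact isClosed_eq ((continuous_norm.pow 2).smul (grad_continuous f))
    (((grad_continuous f).inner (𝕜 := ℝ) continuous_id).smul continuous_id)

/-- If `sR > 0` satisfies Condition 1 and `0 < R < sR`, then `Γ_ℝ(f) ∩ B_R` is
connected. -/
theorem stmt10 (n : ℕ) (f : MvPolynomial (Fin n) ℝ)
    (hf0 : evalP f 0 = 0) (hgrad : grad f 0 = 0)
    (sR : ℝ) (hsR : 0 < sR) (hcond : Cond1 f sR) (R : ℝ) (hR : 0 < R) (hRlt : R < sR) :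
    IsConnected (Gamma f ∩ closedBall (0 : EuclideanSpace ℝ (Fin n)) R) := by
  set E := EuclideanSpace ℝ (Fin n)
  set K := Gamma f ∩ closedBall (0 : E) R with hKdef
  have hGclosed : IsClosed (Gamma f) := gamma_closed f hgrad
  have h0Gamma : (0 : E) ∈ Gamma f := ⟨0, by simp [hgrad]⟩
  have h0K : (0 : E) ∈ K := ⟨h0Gamma, mem_closedBall_self (le_of_lt hR)⟩
  have hKclosed : IsClosed K := hGclosed.inter Metric.isClosed_closedBall
  have hKcomp : IsCompact K := (isCompact_closedBall (0 : E) R).inter_left hGclosed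
  suffices hsub : ∀ x ∈ K, x ∈ connectedComponentIn K 0 by
    refine ⟨⟨0, h0K⟩, ?_⟩
    have hKeq : K = connectedComponentIn K 0 :=
      subset_antisymm hsub (connectedComponentIn_subset _ _)
    rw [hKeq]
    exact isPreconnected_connectedComponentIn
  intro x hx
  set C := connectedComponentIn K x with hCdef
  have hxC : x ∈ C := mem_connectedComponentIn hx
  have hCK : C ⊆ K := connectedComponentIn_subset _ _
  have hCpre : IsPreconnected C := isPreconnected_connectedComponentIn
  have hCclosed : IsClosed C := by
    apply isClosed_of_closure_subset
    exact hCpre.closure.subset_connectedComponentIn (subset_closure hxC)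
      (closure_minimal hCK hKclosed)
  have hCcomp : IsCompact C := hKcomp.of_isClosed_subset hCclosed hCK
  obtain ⟨v, hvC, hvmin⟩ :=
    hCcomp.exists_isMinOn ⟨x, hxC⟩ (continuous_norm.continuousOn (s := C))
  have hvmin' : ∀ y ∈ C, ‖v‖ ≤ ‖y‖ := isMinOn_iff.mp hvmin
  have hv0 : v = 0 := by
    by_contra hv0
    have hvK := hCK hvC
    have hvR : ‖v‖ ≤ R := by
      have h := hvK.2
      rwa [mem_closedBall_zero_iff] at h
    obtain ⟨O, a, b, tb, φ, hO, hOball, hatb, htbb, hφdiff, hφim, hφtb, hderiv⟩ :=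
      hcond v hvK.1 hv0 (lt_of_le_of_lt hvR hRlt)
    set h : ℝ → ℝ := fun t => ‖φ t‖ ^ 2 with hhdef
    have htbmem : tb ∈ Ioo a b := ⟨hatb, htbb⟩
    have hhdiff : DifferentiableAt ℝ h tb := by
      have h1 : DifferentiableAt ℝ φ tb := hφdiff tb htbmem
      have heq : h = fun t => (inner ℝ (φ t) (φ t) : ℝ) := by
        funext t
        rw [real_inner_self_eq_norm_sq]
      rw [heq]
      exact h1.inner ℝ h1
    have hd := hhdiff.hasDerivAt
    rw [hasDerivAt_iff_tendsto_slope] at hd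
    have hIoo : Ioo a b ∈ nhdsWithin tb {tb}ᶜ :=
      mem_nhdsWithin_of_mem_nhds (isOpen_Ioo.mem_nhds htbmem)
    -- find an interval J adjacent to tb on which h < h tb
    have key : ∃ J : Set ℝ, IsPreconnected J ∧ tb ∈ J ∧ J ⊆ Ioo a b ∧
        (∃ s₀ ∈ J, s₀ ≠ tb) ∧ ∀ s ∈ J, s ≠ tb → h s < h tb := by
      rcases lt_or_gt_of_ne hderiv with hneg | hpos
      · -- deriv < 0 : use interval to the right
        have hslope : ∀ᶠ s in nhdsWithin tb {tb}ᶜ, slope h tb s < 0 :=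
          hd.eventually (eventually_lt_nhds hneg)
        have hcomb := hslope.and (Filter.eventually_mem_set.mpr hIoo)
        rw [eventually_nhdsWithin_iff] at hcomb
        obtain ⟨ε, hε, hball⟩ := Metric.eventually_nhds_iff.mp hcomb
        set c := min b (tb + ε) with hcdef
        have hcb : tb < c := lt_min htbb (by linarith)
        refine ⟨Ico tb c, isPreconnected_Ico, ⟨le_refl tb, hcb⟩, ?_, ?_, ?_⟩
        · intro s hs
          exact ⟨lt_of_lt_of_le hatb hs.1, lt_of_lt_of_le hs.2 (min_le_left _ _)⟩
        · exact ⟨(tb + c) / 2, ⟨by linarith, by linarith⟩, ne_of_gt (by linarith)⟩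
        · intro s hs hne
          have hst : tb < s := lt_of_le_of_ne hs.1 (Ne.symm hne)
          have hdist : dist s tb < ε := by
            rw [Real.dist_eq, abs_lt]
            constructor
            · linarith
            · have : s < tb + ε := lt_of_lt_of_le hs.2 (min_le_right _ _)
              linarith
          have hsl := (hball hdist (by simpa using hne)).1
          rw [slope_def_field] at hsl
          have hden : (0 : ℝ) < s - tb := by linarith
          have := (div_neg_iff.mp hsl)
          rcases this with ⟨h1, h2⟩ | ⟨h1, h2⟩
          · linarith
          · linarith
      · -- deriv > 0 : use interval to the left
        have hslope : ∀ᶠ s in nhdsWithin tb {tb}ᶜ, 0 < slope h tb s :=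
          hd.eventually (eventually_gt_nhds hpos)
        have hcomb := hslope.and (Filter.eventually_mem_set.mpr hIoo)
        rw [eventually_nhdsWithin_iff] at hcomb
        obtain ⟨ε, hε, hball⟩ := Metric.eventually_nhds_iff.mp hcomb
        set c := max a (tb - ε) with hcdef
        have hcb : c < tb := max_lt hatb (by linarith)
        refine ⟨Ioc c tb, isPreconnected_Ioc, ⟨hcb, le_refl tb⟩, ?_, ?_, ?_⟩
        · intro s hs
          exact ⟨lt_of_le_of_lt (le_max_left _ _) hs.1, lt_of_le_of_lt hs.2 htbb⟩
        · exact ⟨(c + tb) / 2, ⟨by linarith, by linarith⟩, ne_of_lt (by linarith)⟩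
        · intro s hs hne
          have hst : s < tb := lt_of_le_of_ne hs.2 hne
          have hdist : dist s tb < ε := by
            rw [Real.dist_eq, abs_lt]
            constructor
            · have : tb - ε < s := lt_of_le_of_lt (le_max_right _ _) hs.1
              linarith
            · linarith
          have hsl := (hball hdist (by simpa using hne)).1
          rw [slope_def_field] at hsl
          have hden : s - tb < 0 := by linarith
          have := (div_pos_iff.mp hsl)
          rcases this with ⟨h1, h2⟩ | ⟨h1, h2⟩
          · linarith
          · linarith
    obtain ⟨J, hJpre, htbJ, hJsub, ⟨s₀, hs₀J, hs₀ne⟩, hless⟩ := key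
    have hcont : ContinuousOn φ J := fun s hs =>
      ((hφdiff s (hJsub hs)).continuousAt).continuousWithinAt
    have himpre : IsPreconnected (φ '' J) := hJpre.image φ hcont
    have hnormlt : ∀ s ∈ J, s ≠ tb → ‖φ s‖ < ‖v‖ := by
      intro s hs hne
      have h1 := hless s hs hne
      have h2 : h tb = ‖v‖ ^ 2 := by rw [hhdef]; simp [hφtb]
      rw [h2] at h1
      have h1' : ‖φ s‖ ^ 2 < ‖v‖ ^ 2 := by simpa [hhdef] using h1
      nlinarith [norm_nonneg (φ s), norm_nonneg v]
    have himK : φ '' J ⊆ K := by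
      rintro _ ⟨s, hs, rfl⟩
      have hsΓ : φ s ∈ Gamma f := by
        have hmem : φ s ∈ φ '' Ioo a b := mem_image_of_mem φ (hJsub hs)
        rw [hφim] at hmem
        exact hmem.1
      refine ⟨hsΓ, ?_⟩
      rw [mem_closedBall_zero_iff]
      by_cases hse : s = tb
      · rw [hse, hφtb]; exact hvR
      · linarith [hnormlt s hs hse]
    have hvimg : v ∈ φ '' J := ⟨tb, htbJ, hφtb⟩
    have hsubC : φ '' J ⊆ C := by
      have h1 : φ '' J ⊆ connectedComponentIn K v :=
        himpre.subset_connectedComponentIn hvimg himK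
      rw [hCdef, connectedComponentIn_eq hvC]
      exact h1
    have hge : ‖v‖ ≤ ‖φ s₀‖ := hvmin' _ (hsubC ⟨s₀, hs₀J, rfl⟩)
    have hlt : ‖φ s₀‖ < ‖v‖ := hnormlt s₀ hs₀J hs₀ne
    linarith
  have h0C : (0 : E) ∈ C := hv0 ▸ hvC
  have hcc : connectedComponentIn K x = connectedComponentIn K 0 :=
    connectedComponentIn_eq h0C
  rw [← hcc]
  exact hxC
end
end

section
/- Let f ∈ ℝ[X₁,…,Xₙ] be a polynomial with f(0) = 0 and ∇f(0) = 0. Suppose 𝒭 > 0 satisfies Condition 1, 0 < R < 𝒭, and R is an isolation radius of 0 (i.e., Crit_ℝ(f) ∩ B_R = {0}). Then Γ_ℝ(f) ∩ f⁻¹(0) ∩ B_R = {0}; consequently R is a faithful radius of 0. -/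
open MvPolynomial Metric Set

noncomputable section

/-- `R` is a faithful radius of the critical point `0` of `f`. -/
def IsFaithfulRadius {n : ℕ} (f : MvPolynomial (Fin n) ℝ) (R : ℝ) : Prop :=
  0 < R ∧ Crit f ∩ closedBall (0 : EuclideanSpace ℝ (Fin n)) R = {0} ∧
    IsConnected (Gamma f ∩ closedBall (0 : EuclideanSpace ℝ (Fin n)) R) ∧
    Gamma f ∩ {x | evalP f x = 0} ∩ closedBall (0 : EuclideanSpace ℝ (Fin n)) R = {0}

section Aux
open RealInnerProductSpace Filter Topology
variable {n : ℕ}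
local notation "E" => EuclideanSpace ℝ (Fin n)

theorem aux_hasFDerivAt_evalP (f : MvPolynomial (Fin n) ℝ) (x : E) :
    HasFDerivAt (evalP f) (innerSL ℝ (grad f x)) x := by
  induction f using MvPolynomial.induction_on with
  | C a =>
      have h1 : grad (C a : MvPolynomial (Fin n) ℝ) x = 0 := by
        ext i; simp [grad]
      have h2 : evalP (C a : MvPolynomial (Fin n) ℝ) = fun _ => a := by
        funext y; simp [evalP]
      rw [h1, h2, map_zero]
      exact hasFDerivAt_const a x
  | add p q hp hq =>
      have hg : grad (p + q) x = grad p x + grad q x := by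
        ext i; simp [grad, map_add]
      have he : evalP (p + q) = fun y => evalP p y + evalP q y := by
        funext y; simp [evalP, map_add]
      rw [hg, he, map_add]
      exact hp.add hq
  | mul_X p i hp =>
      have he : evalP (p * X i) = fun y : EuclideanSpace ℝ (Fin n) => evalP p y * y i := by
        funext y; simp [evalP]
      have hco : HasFDerivAt (fun y : EuclideanSpace ℝ (Fin n) => y i)
          (EuclideanSpace.proj i : EuclideanSpace ℝ (Fin n) →L[ℝ] ℝ) x :=
        (EuclideanSpace.proj i : EuclideanSpace ℝ (Fin n) →L[ℝ] ℝ).hasFDerivAt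
      have hmul := hp.mul' hco
      rw [he]
      refine hmul.congr_fderiv ?_
      have hgr : grad (p * X i) x = x i • grad p x + evalP p x • EuclideanSpace.single i 1 := by
        ext j
        show eval (fun j => x j) (pderiv j (p * X i)) = _
        rw [pderiv_mul]
        simp [pderiv_X, grad, evalP, EuclideanSpace.single_apply, Pi.single_apply]
        rcases eq_or_ne i j with h | h
        · subst h; simp [mul_comm]
        · simp [h, h.symm, mul_comm]
      ext v
      rw [innerSL_apply_apply, hgr, inner_add_left, real_inner_smul_left, real_inner_smul_left,
        EuclideanSpace.inner_single_left]
      simp only [ContinuousLinearMap.add_apply, ContinuousLinearMap.smul_apply,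
        ContinuousLinearMap.smulRight_apply, innerSL_apply_apply, smul_eq_mul, op_smul_eq_mul, map_one,
        PiLp.proj_apply]
      ring

theorem aux_continuous_evalP (f : MvPolynomial (Fin n) ℝ) : Continuous (evalP f) := by
  have h : Differentiable ℝ (evalP f) := fun x => (aux_hasFDerivAt_evalP f x).differentiableAt
  exact h.continuous

theorem aux_continuous_grad (f : MvPolynomial (Fin n) ℝ) : Continuous (grad f) := by
  have h : Continuous fun x : EuclideanSpace ℝ (Fin n) =>
      (fun i => evalP (pderiv i f) x : Fin n → ℝ) :=
    continuous_pi fun i => aux_continuous_evalP _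
  exact (PiLp.continuous_toLp (p := 2) (β := fun _ : Fin n => ℝ)).comp h

theorem aux_isClosed_gamma (f : MvPolynomial (Fin n) ℝ) (h0 : grad f 0 = 0) :
    IsClosed (Gamma f) := by
  have heq : Gamma f = {x : EuclideanSpace ℝ (Fin n) |
      (‖x‖^2 : ℝ) • grad f x = ⟪grad f x, x⟫ • x} := by
    ext x
    constructor
    · rintro ⟨l, hl⟩
      show (‖x‖^2 : ℝ) • grad f x = ⟪grad f x, x⟫ • x
      rw [hl, real_inner_smul_left, real_inner_self_eq_norm_sq, smul_smul]; ring_nf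
    · intro hx
      by_cases hx0 : x = 0
      · exact ⟨0, by rw [hx0, h0, zero_smul]⟩
      · have hn : (‖x‖^2 : ℝ) ≠ 0 := pow_ne_zero 2 (norm_ne_zero_iff.mpr hx0)
        have hx' : (‖x‖^2 : ℝ) • grad f x = ⟪grad f x, x⟫ • x := hx
        refine ⟨⟪grad f x, x⟫ / ‖x‖^2, ?_⟩
        rw [div_eq_inv_mul, ← smul_smul, ← hx', smul_smul, inv_mul_cancel₀ hn, one_smul]
  rw [heq]
  apply isClosed_eq
  · exact (continuous_norm.pow 2).smul (aux_continuous_grad f)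
  · exact ((aux_continuous_grad f).inner (𝕜 := ℝ) continuous_id).smul continuous_id

set_option maxHeartbeats 1600000 in
theorem aux_arc {f : MvPolynomial (Fin n) ℝ} {sR : ℝ} (hcond : Cond1 f sR)
    {u : E} {l : ℝ} (hu : grad f u = l • u) (hu0 : u ≠ 0) (hun : ‖u‖ < sR) :
    ∃ (S : Set (EuclideanSpace ℝ (Fin n))) (v : EuclideanSpace ℝ (Fin n)),
      IsPreconnected S ∧ u ∈ S ∧ v ∈ S ∧
      (∀ x ∈ S, x ∈ Gamma f ∧ ‖x‖ ≤ ‖u‖ ∧ x ≠ 0) ∧ ‖v‖ < ‖u‖ ∧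
      (0 < l → evalP f v < evalP f u) := by
  obtain ⟨O, a, b, tb, φ, hO, hOsub, hatb, htbb, hdiff, himg, hφtb, hder⟩ :=
    hcond u ⟨l, hu⟩ hu0 hun
  have htbmem : tb ∈ Ioo a b := ⟨hatb, htbb⟩
  have hdφ : HasDerivAt φ (deriv φ tb) tb := (hdiff tb htbmem).hasDerivAt
  set p := deriv φ tb with hpdef
  set d2 : ℝ := ⟪u, p⟫ with hd2def
  have hg' : HasDerivAt (fun t => ‖φ t‖ ^ 2) (2 * d2) tb := by
    have h1 : HasDerivAt (fun t => ⟪φ t, φ t⟫) (⟪φ tb, p⟫ + ⟪p, φ tb⟫) tb :=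
      HasDerivAt.inner ℝ hdφ hdφ
    rw [hφtb] at h1
    have heq : (fun t => ‖φ t‖ ^ 2) = fun t => ⟪φ t, φ t⟫ :=
      funext fun t => (real_inner_self_eq_norm_sq _).symm
    rw [heq]
    convert h1 using 1
    rw [hd2def, real_inner_comm p u]; ring
  have hd20 : d2 ≠ 0 := by
    have h2 : (2:ℝ) * d2 ≠ 0 := hg'.deriv ▸ hder
    intro h; exact h2 (by rw [h]; ring)
  have hψ' : HasDerivAt (fun t => evalP f (φ t)) (l * d2) tb := by
    have h0 : HasFDerivAt (evalP f) (innerSL ℝ (grad f (φ tb))) (φ tb) :=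
      aux_hasFDerivAt_evalP f (φ tb)
    have h1 := h0.comp_hasDerivAt tb hdφ
    refine h1.congr_deriv ?_
    rw [hφtb, hu]
    rw [innerSL_apply_apply, real_inner_smul_left]
  have hgq : ‖φ tb‖ ^ 2 = ‖u‖ ^ 2 := by rw [hφtb]
  have hqpos : 0 < ‖u‖ ^ 2 := pow_pos (norm_pos_iff.mpr hu0) 2
  have hs1 : Tendsto (slope (fun t => ‖φ t‖ ^ 2) tb) (𝓝[≠] tb) (𝓝 (2*d2)) :=
    hasDerivAt_iff_tendsto_slope.mp hg'
  have hs2 : Tendsto (slope (fun t => evalP f (φ t)) tb) (𝓝[≠] tb) (𝓝 (l*d2)) :=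
    hasDerivAt_iff_tendsto_slope.mp hψ'
  have hA1 : {s | |slope (fun t => ‖φ t‖ ^ 2) tb s - 2*d2| < |d2|} ∈ 𝓝[≠] tb := by
    have hb : Metric.ball (2*d2) |d2| ∈ 𝓝 (2*d2) := Metric.ball_mem_nhds _ (abs_pos.mpr hd20)
    filter_upwards [hs1 hb] with s hs
    simpa [Real.dist_eq] using hs
  have hA2 : {s | 0 < l → |slope (fun t => evalP f (φ t)) tb s - l*d2| < |l*d2|} ∈ 𝓝[≠] tb := by
    by_cases hl : 0 < l
    · have hc0 : l*d2 ≠ 0 := mul_ne_zero (ne_of_gt hl) hd20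
      filter_upwards [hs2 (Metric.ball_mem_nhds _ (abs_pos.mpr hc0))] with s hs _
      simpa [Real.dist_eq] using hs
    · filter_upwards with s
      exact fun h => absurd h hl
  have hA3 : Ioo a b ∈ 𝓝[≠] tb := nhdsWithin_le_nhds (isOpen_Ioo.mem_nhds htbmem)
  have hAll := Filter.inter_mem (Filter.inter_mem hA1 hA2) hA3
  rw [Metric.mem_nhdsWithin_iff] at hAll
  obtain ⟨ε, hε, hball⟩ := hAll
  have habs : 0 < |d2| := abs_pos.mpr hd20
  set ε' := min (ε/2) (‖u‖^2 / (6 * |d2|)) with hε'def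
  have hε'pos : 0 < ε' := lt_min (by linarith) (by positivity)
  have hε'ε : ε' < ε := lt_of_le_of_lt (min_le_left _ _) (by linarith)
  have hε'q : 3 * |d2| * ε' ≤ ‖u‖^2 / 2 := by
    have h1 : ε' ≤ ‖u‖^2 / (6*|d2|) := min_le_right _ _
    have h2 : 3 * |d2| * (‖u‖^2 / (6*|d2|)) = ‖u‖^2 / 2 := by
      field_simp; ring
    nlinarith
  have hmem : ∀ s, s ≠ tb → |s - tb| ≤ ε' →
      (|slope (fun t => ‖φ t‖ ^ 2) tb s - 2*d2| < |d2| ∧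
        (0 < l → |slope (fun t => evalP f (φ t)) tb s - l*d2| < |l*d2|)) ∧ s ∈ Ioo a b := by
    intro s hs hle
    exact hball ⟨by rw [mem_ball, Real.dist_eq]; linarith, hs⟩
  have hslopeg : ∀ s, s ≠ tb →
      ‖φ s‖ ^ 2 - ‖φ tb‖ ^ 2 = slope (fun t => ‖φ t‖ ^ 2) tb s * (s - tb) := by
    intro s hs
    rw [slope_def_field]
    exact (div_mul_cancel₀ _ (sub_ne_zero.mpr hs)).symm
  have hslopeψ : ∀ s, s ≠ tb →
      evalP f (φ s) - evalP f (φ tb) = slope (fun t => evalP f (φ t)) tb s * (s - tb) := by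
    intro s hs
    rw [slope_def_field]
    exact (div_mul_cancel₀ _ (sub_ne_zero.mpr hs)).symm

  rcases hd20.lt_or_gt with hneg | hpos
  · -- d2 < 0 : move right
    have hd2a : |d2| = -d2 := abs_of_neg hneg
    have ht₁lt : tb < tb + ε' := by linarith
    have hfacts : ∀ s ∈ Ioc tb (tb + ε'), ‖φ s‖^2 < ‖u‖^2 ∧ 0 < ‖φ s‖^2 ∧ s ∈ Ioo a b := by
      intro s hs
      have hsne : s ≠ tb := ne_of_gt hs.1
      have habs' : |s - tb| ≤ ε' := by
        rw [abs_of_nonneg (by linarith [hs.1.le])]; linarith [hs.2]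
      obtain ⟨⟨hg1, _⟩, hIoo⟩ := hmem s hsne habs'
      rw [hd2a] at hg1
      obtain ⟨hlo, hup⟩ := abs_lt.mp hg1
      have hformula := hslopeg s hsne
      have hstb : 0 < s - tb := by linarith [hs.1]
      have hsub : s - tb ≤ ε' := by linarith [hs.2]
      refine ⟨?_, ?_, hIoo⟩
      · rw [← hgq]; nlinarith
      · have h2 : ‖φ s‖^2 - ‖φ tb‖^2 > 3*d2 * (s - tb) := by nlinarith
        have h3 : 3*d2*(s - tb) ≥ -(3 * |d2| * ε') := by rw [hd2a]; nlinarith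
        have h4 := hε'q
        rw [hgq] at h2
        linarith
    have hsubIoo : Icc tb (tb + ε') ⊆ Ioo a b := by
      intro s hs
      rcases eq_or_lt_of_le hs.1 with heq | hlt
      · exact heq ▸ htbmem
      · exact (hfacts s ⟨hlt, hs.2⟩).2.2
    have hcont : ContinuousOn φ (Icc tb (tb + ε')) := fun s hs =>
      ((hdiff s (hsubIoo hs)).continuousAt).continuousWithinAt
    refine ⟨φ '' Icc tb (tb + ε'), φ (tb + ε'), (isPreconnected_Icc).image φ hcont,
      ⟨tb, ⟨le_refl _, ht₁lt.le⟩, hφtb⟩, ⟨tb + ε', ⟨ht₁lt.le, le_refl _⟩, rfl⟩, ?_, ?_, ?_⟩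
    · rintro x ⟨s, hs, rfl⟩
      have hΓ : φ s ∈ Gamma f := by
        have hmem2 : φ s ∈ φ '' Ioo a b := ⟨s, hsubIoo hs, rfl⟩
        rw [himg] at hmem2; exact hmem2.1
      rcases eq_or_lt_of_le hs.1 with heq | hlt
      · refine ⟨hΓ, ?_, ?_⟩
        · rw [← heq, hφtb]
        · rw [← heq, hφtb]; exact hu0
      · obtain ⟨hlt2, hpos2, _⟩ := hfacts s ⟨hlt, hs.2⟩
        refine ⟨hΓ, ?_, ?_⟩
        · nlinarith [norm_nonneg (φ s), norm_nonneg u]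
        · intro h0; rw [h0] at hpos2; simp at hpos2
    · obtain ⟨hlt2, hpos2, _⟩ := hfacts (tb + ε') ⟨ht₁lt, le_refl _⟩
      nlinarith [norm_nonneg (φ (tb + ε')), norm_nonneg u]
    · intro hl
      have hsne : (tb + ε') ≠ tb := ne_of_gt ht₁lt
      have habs' : |(tb + ε') - tb| ≤ ε' := by
        rw [abs_of_nonneg (by linarith)]; linarith
      obtain ⟨⟨_, hψ1⟩, _⟩ := hmem (tb + ε') hsne habs'
      have hψ2 := hψ1 hl
      have hc : l * d2 < 0 := mul_neg_of_pos_of_neg hl hneg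
      rw [abs_of_neg hc] at hψ2
      obtain ⟨hlo, hup⟩ := abs_lt.mp hψ2
      have hformula := hslopeψ (tb + ε') hsne
      have hlt3 : evalP f (φ (tb + ε')) - evalP f (φ tb) < 0 := by nlinarith
      rw [hφtb] at hlt3; linarith
  · -- 0 < d2 : move left
    have hd2a : |d2| = d2 := abs_of_pos hpos
    have ht₁lt : tb - ε' < tb := by linarith
    have hfacts : ∀ s ∈ Ico (tb - ε') tb, ‖φ s‖^2 < ‖u‖^2 ∧ 0 < ‖φ s‖^2 ∧ s ∈ Ioo a b := by
      intro s hs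
      have hsne : s ≠ tb := ne_of_lt hs.2
      have habs' : |s - tb| ≤ ε' := by
        rw [abs_sub_comm, abs_of_nonneg (by linarith [hs.2.le])]; linarith [hs.1]
      obtain ⟨⟨hg1, _⟩, hIoo⟩ := hmem s hsne habs'
      rw [hd2a] at hg1
      obtain ⟨hlo, hup⟩ := abs_lt.mp hg1
      have hformula := hslopeg s hsne
      have hstb : s - tb < 0 := by linarith [hs.2]
      have hsub : -(s - tb) ≤ ε' := by linarith [hs.1]
      refine ⟨?_, ?_, hIoo⟩
      · rw [← hgq]; nlinarith
      · have h2 : ‖φ s‖^2 - ‖φ tb‖^2 > 3*d2 * (s - tb) := by nlinarith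
        have h3 : 3*d2*(s - tb) ≥ -(3 * |d2| * ε') := by rw [hd2a]; nlinarith
        have h4 := hε'q
        rw [hgq] at h2
        linarith
    have hsubIoo : Icc (tb - ε') tb ⊆ Ioo a b := by
      intro s hs
      rcases eq_or_lt_of_le hs.2 with heq | hlt
      · exact heq ▸ htbmem
      · exact (hfacts s ⟨hs.1, hlt⟩).2.2
    have hcont : ContinuousOn φ (Icc (tb - ε') tb) := fun s hs =>
      ((hdiff s (hsubIoo hs)).continuousAt).continuousWithinAt
    refine ⟨φ '' Icc (tb - ε') tb, φ (tb - ε'), (isPreconnected_Icc).image φ hcont,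
      ⟨tb, ⟨ht₁lt.le, le_refl _⟩, hφtb⟩, ⟨tb - ε', ⟨le_refl _, ht₁lt.le⟩, rfl⟩, ?_, ?_, ?_⟩
    · rintro x ⟨s, hs, rfl⟩
      have hΓ : φ s ∈ Gamma f := by
        have hmem2 : φ s ∈ φ '' Ioo a b := ⟨s, hsubIoo hs, rfl⟩
        rw [himg] at hmem2; exact hmem2.1
      rcases eq_or_lt_of_le hs.2 with heq | hlt
      · refine ⟨hΓ, ?_, ?_⟩
        · rw [heq, hφtb]
        · rw [heq, hφtb]; exact hu0
      · obtain ⟨hlt2, hpos2, _⟩ := hfacts s ⟨hs.1, hlt⟩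
        refine ⟨hΓ, ?_, ?_⟩
        · nlinarith [norm_nonneg (φ s), norm_nonneg u]
        · intro h0; rw [h0] at hpos2; simp at hpos2
    · obtain ⟨hlt2, hpos2, _⟩ := hfacts (tb - ε') ⟨le_refl _, ht₁lt⟩
      nlinarith [norm_nonneg (φ (tb - ε')), norm_nonneg u]
    · intro hl
      have hsne : (tb - ε') ≠ tb := ne_of_lt ht₁lt
      have habs' : |(tb - ε') - tb| ≤ ε' := by
        rw [abs_sub_comm, abs_of_nonneg (by linarith)]; linarith
      obtain ⟨⟨_, hψ1⟩, _⟩ := hmem (tb - ε') hsne habs'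
      have hψ2 := hψ1 hl
      have hc : 0 < l * d2 := mul_pos hl hpos
      rw [abs_of_pos hc] at hψ2
      obtain ⟨hlo, hup⟩ := abs_lt.mp hψ2
      have hformula := hslopeψ (tb - ε') hsne
      have hlt3 : evalP f (φ (tb - ε')) - evalP f (φ tb) < 0 := by nlinarith
      rw [hφtb] at hlt3; linarith

theorem aux_claimA {f : MvPolynomial (Fin n) ℝ} {sR R : ℝ}
    (hf0 : evalP f 0 = 0) (hgrad : grad f 0 = 0)
    (hcond : Cond1 f sR) (hRlt : R < sR)
    (hiso : Crit f ∩ closedBall (0 : EuclideanSpace ℝ (Fin n)) R = {0})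
    {xs : EuclideanSpace ℝ (Fin n)} {ls : ℝ} (hxs : grad f xs = ls • xs) (hxs0 : xs ≠ 0)
    (hxsR : ‖xs‖ ≤ R) (hfxs : evalP f xs = 0) (hls : 0 < ls) : False := by
  classical
  set Es : Set (EuclideanSpace ℝ (Fin n)) :=
    (Gamma f ∩ closedBall (0 : EuclideanSpace ℝ (Fin n)) R) \ {0} with hEdef
  have hxsE : xs ∈ Es :=
    ⟨⟨⟨ls, hxs⟩, by simpa [mem_closedBall, dist_eq_norm] using hxsR⟩, by simp [hxs0]⟩
  set K := connectedComponentIn Es xs with hKdef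
  have hKsub : K ⊆ Es := connectedComponentIn_subset _ _
  have hxsK : xs ∈ K := mem_connectedComponentIn hxsE
  have hKpre : IsPreconnected K := isPreconnected_connectedComponentIn
  have hmul : ∀ u ∈ K, ∃ l : ℝ, grad f u = l • u ∧ 0 < l := by
    intro u huK
    obtain ⟨⟨⟨l, hl⟩, hball⟩, hne⟩ := hKsub huK
    have hune : u ≠ 0 := by simpa using hne
    have huR : ‖u‖ ≤ R := by simpa [mem_closedBall, dist_eq_norm] using hball
    have hl0 : l ≠ 0 := by
      intro h
      rw [h, zero_smul] at hl
      have hmem : u ∈ Crit f ∩ closedBall (0 : EuclideanSpace ℝ (Fin n)) R :=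
        ⟨hl, by simpa [mem_closedBall, dist_eq_norm] using huR⟩
      rw [hiso] at hmem
      exact hune (by simpa using hmem)
    refine ⟨l, hl, ?_⟩
    by_contra hnotpos
    have hlneg : l < 0 := lt_of_le_of_ne (not_lt.mp hnotpos) hl0
    have hcont : ContinuousOn (fun x : EuclideanSpace ℝ (Fin n) => ⟪grad f x, x⟫) K :=
      ((aux_continuous_grad f).inner (𝕜 := ℝ) continuous_id).continuousOn
    have hpreim : IsPreconnected ((fun x : EuclideanSpace ℝ (Fin n) => ⟪grad f x, x⟫) '' K) :=
      hKpre.image _ hcont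
    have hupos : 0 < ‖u‖ ^ 2 := pow_pos (norm_pos_iff.mpr hune) 2
    have hvalneg : ⟪grad f u, u⟫ < 0 := by
      rw [hl, real_inner_smul_left, real_inner_self_eq_norm_sq]
      exact mul_neg_of_neg_of_pos hlneg hupos
    have hvalpos : 0 < ⟪grad f xs, xs⟫ := by
      rw [hxs, real_inner_smul_left, real_inner_self_eq_norm_sq]
      exact mul_pos hls (pow_pos (norm_pos_iff.mpr hxs0) 2)
    have h0mem : (0:ℝ) ∈ (fun x : EuclideanSpace ℝ (Fin n) => ⟪grad f x, x⟫) '' K :=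
      hpreim.Icc_subset ⟨u, huK, rfl⟩ ⟨xs, hxsK, rfl⟩ ⟨le_of_lt hvalneg, le_of_lt hvalpos⟩
    obtain ⟨z, hzK, hz⟩ := h0mem
    have hz : ⟪grad f z, z⟫ = (0:ℝ) := hz
    obtain ⟨⟨⟨lz, hlz⟩, hzball⟩, hzne⟩ := hKsub hzK
    have hzne' : z ≠ 0 := by simpa using hzne
    rw [hlz, real_inner_smul_left, real_inner_self_eq_norm_sq] at hz
    have hlz0 : lz = 0 :=
      (mul_eq_zero.mp hz).resolve_right (ne_of_gt (pow_pos (norm_pos_iff.mpr hzne') 2))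
    rw [hlz0, zero_smul] at hlz
    have hmem : z ∈ Crit f ∩ closedBall (0 : EuclideanSpace ℝ (Fin n)) R := ⟨hlz, hzball⟩
    rw [hiso] at hmem
    exact hzne' (by simpa using hmem)
  have hnomin : ∀ u ∈ K, ∃ v ∈ K, evalP f v < evalP f u := by
    intro u huK
    obtain ⟨l, hl, hlpos⟩ := hmul u huK
    obtain ⟨⟨_, hball⟩, hne⟩ := hKsub huK
    have hune : u ≠ 0 := by simpa using hne
    have huR : ‖u‖ ≤ R := by simpa [mem_closedBall, dist_eq_norm] using hball
    obtain ⟨S, v, hSpre, huS, hvS, hSprop, hvlt, hvf⟩ :=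
      aux_arc hcond hl hune (lt_of_le_of_lt huR hRlt)
    have hSsub : S ⊆ Es := by
      intro x hxS
      obtain ⟨hxΓ, hxn, hxne⟩ := hSprop x hxS
      exact ⟨⟨hxΓ, by simp only [mem_closedBall, dist_eq_norm, sub_zero]; linarith⟩,
        by simp [hxne]⟩
    have hSK : S ⊆ K := by
      rw [hKdef, connectedComponentIn_eq (show u ∈ connectedComponentIn Es xs from huK)]
      exact hSpre.subset_connectedComponentIn huS hSsub
    exact ⟨v, hSK hvS, hvf hlpos⟩
  have hbdd : Bornology.IsBounded K :=
    (Metric.isBounded_closedBall (x := (0 : EuclideanSpace ℝ (Fin n))) (r := R)).subset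
      (fun x hx => (hKsub hx).1.2)
  have hcomp : IsCompact (closure K) :=
    Metric.isCompact_of_isClosed_isBounded isClosed_closure hbdd.closure
  obtain ⟨v₀, hv₀mem, hv₀min⟩ :=
    hcomp.exists_isMinOn ⟨xs, subset_closure hxsK⟩ ((aux_continuous_evalP f).continuousOn)
  have hv₀notK : v₀ ∉ K := by
    intro hv₀K
    obtain ⟨v, hvK, hvlt⟩ := hnomin v₀ hv₀K
    exact absurd (isMinOn_iff.mp hv₀min v (subset_closure hvK)) (not_le.mpr hvlt)
  have hv₀0 : v₀ = 0 := by
    by_contra hne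
    have hclosed : IsClosed (Gamma f ∩ closedBall (0 : EuclideanSpace ℝ (Fin n)) R) :=
      (aux_isClosed_gamma f hgrad).inter Metric.isClosed_closedBall
    have hsubc : closure K ⊆ Gamma f ∩ closedBall (0 : EuclideanSpace ℝ (Fin n)) R :=
      closure_minimal (fun x hx => (hKsub hx).1) hclosed
    have hv₀E : v₀ ∈ Es := ⟨hsubc hv₀mem, by simp [hne]⟩
    have hins : insert v₀ K ⊆ Es := insert_subset hv₀E hKsub
    have hinspre : IsPreconnected (insert v₀ K) :=
      hKpre.subset_closure (subset_insert _ _) (insert_subset hv₀mem subset_closure)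
    have hsubK : insert v₀ K ⊆ K := by
      rw [hKdef]
      exact hinspre.subset_connectedComponentIn (mem_insert_iff.mpr (Or.inr hxsK)) hins
    exact hv₀notK (hsubK (mem_insert _ _))
  obtain ⟨v, hvK, hvlt⟩ := hnomin xs hxsK
  have hge := isMinOn_iff.mp hv₀min v (subset_closure hvK)
  rw [hv₀0, hf0] at hge
  rw [hfxs] at hvlt
  linarith

theorem aux_grad_neg (f : MvPolynomial (Fin n) ℝ) (x : EuclideanSpace ℝ (Fin n)) :
    grad (-f) x = -grad f x := by
  ext i
  show eval (fun j => x j) (pderiv i (-f)) = -(eval (fun j => x j) (pderiv i f))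
  rw [map_neg, map_neg]

theorem aux_evalP_neg (f : MvPolynomial (Fin n) ℝ) (x : EuclideanSpace ℝ (Fin n)) :
    evalP (-f) x = -evalP f x := by
  show eval (fun j => x j) (-f) = _
  rw [map_neg]; rfl

theorem aux_Gamma_neg (f : MvPolynomial (Fin n) ℝ) : Gamma (-f) = Gamma f := by
  ext x
  constructor
  · rintro ⟨l, hl⟩
    rw [aux_grad_neg] at hl
    exact ⟨-l, by rw [← neg_neg (grad f x), hl, neg_smul]⟩
  · rintro ⟨l, hl⟩
    exact ⟨-l, by rw [aux_grad_neg, hl, neg_smul]⟩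

theorem aux_Crit_neg (f : MvPolynomial (Fin n) ℝ) : Crit (-f) = Crit f := by
  ext x
  show grad (-f) x = 0 ↔ grad f x = 0
  rw [aux_grad_neg, neg_eq_zero]

theorem aux_Cond1_neg {f : MvPolynomial (Fin n) ℝ} {sR : ℝ} (h : Cond1 f sR) :
    Cond1 (-f) sR := by
  unfold Cond1 at h ⊢
  rw [aux_Gamma_neg]
  exact h

theorem stmt11' (f : MvPolynomial (Fin n) ℝ)
    (hf0 : evalP f 0 = 0) (hgrad : grad f 0 = 0)
    (sR : ℝ) (hsR : 0 < sR) (hcond : Cond1 f sR) (R : ℝ) (hR : 0 < R) (hRlt : R < sR)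
    (hiso : Crit f ∩ closedBall (0 : EuclideanSpace ℝ (Fin n)) R = {0}) :
    Gamma f ∩ {x | evalP f x = 0} ∩ closedBall (0 : EuclideanSpace ℝ (Fin n)) R = {0} ∧
    (0 < R ∧ Crit f ∩ closedBall (0 : EuclideanSpace ℝ (Fin n)) R = {0} ∧
      IsConnected (Gamma f ∩ closedBall (0 : EuclideanSpace ℝ (Fin n)) R) ∧
      Gamma f ∩ {x | evalP f x = 0} ∩ closedBall (0 : EuclideanSpace ℝ (Fin n)) R = {0}) := by
  have h0Γ : (0 : EuclideanSpace ℝ (Fin n)) ∈ Gamma f := ⟨0, by rw [hgrad, zero_smul]⟩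
  have hset : Gamma f ∩ {x | evalP f x = 0} ∩
      closedBall (0 : EuclideanSpace ℝ (Fin n)) R = {0} := by
    apply Subset.antisymm
    · rintro x ⟨⟨hxΓ, hxf⟩, hxball⟩
      by_contra hne
      have hx0 : x ≠ 0 := by simpa using hne
      have hxR : ‖x‖ ≤ R := by simpa [mem_closedBall, dist_eq_norm] using hxball
      obtain ⟨l, hl⟩ := hxΓ
      have hl0 : l ≠ 0 := by
        intro h
        rw [h, zero_smul] at hl
        have hmem : x ∈ Crit f ∩ closedBall (0 : EuclideanSpace ℝ (Fin n)) R := ⟨hl, hxball⟩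
        rw [hiso] at hmem
        exact hx0 (by simpa using hmem)
      rcases hl0.lt_or_gt with hlneg | hlpos
      · have hf0' : evalP (-f) 0 = 0 := by rw [aux_evalP_neg, hf0, neg_zero]
        have hgrad' : grad (-f) 0 = 0 := by rw [aux_grad_neg, hgrad, neg_zero]
        have hcond' : Cond1 (-f) sR := aux_Cond1_neg hcond
        have hiso' : Crit (-f) ∩ closedBall (0 : EuclideanSpace ℝ (Fin n)) R = {0} := by
          rw [aux_Crit_neg]; exact hiso
        have hl' : grad (-f) x = (-l) • x := by rw [aux_grad_neg, hl, neg_smul]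
        have hxf' : evalP f x = 0 := hxf
        have hfx' : evalP (-f) x = 0 := by rw [aux_evalP_neg, hxf', neg_zero]
        exact (aux_claimA hf0' hgrad' hcond' hRlt hiso' hl' hx0 hxR hfx'
          (by linarith)).elim
      · exact (aux_claimA hf0 hgrad hcond hRlt hiso hl hx0 hxR hxf hlpos).elim
    · intro x hx
      rw [mem_singleton_iff] at hx
      subst hx
      exact ⟨⟨h0Γ, hf0⟩, by simp [mem_closedBall, hR.le]⟩
  have h0T : (0 : EuclideanSpace ℝ (Fin n)) ∈
      Gamma f ∩ closedBall (0 : EuclideanSpace ℝ (Fin n)) R :=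
    ⟨h0Γ, by simp [mem_closedBall, hR.le]⟩
  have hconn : IsConnected (Gamma f ∩ closedBall (0 : EuclideanSpace ℝ (Fin n)) R) := by
    refine ⟨⟨0, h0T⟩, ?_⟩
    set T := Gamma f ∩ closedBall (0 : EuclideanSpace ℝ (Fin n)) R with hTdef
    apply isPreconnected_of_forall (0 : EuclideanSpace ℝ (Fin n))
    intro y hyT
    have h0D : (0 : EuclideanSpace ℝ (Fin n)) ∈ connectedComponentIn T y := by
      set D := connectedComponentIn T y with hDdef
      have hDsub : D ⊆ T := connectedComponentIn_subset _ _
      have hTclosed : IsClosed T := (aux_isClosed_gamma f hgrad).inter Metric.isClosed_closedBall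
      have hyD : y ∈ D := mem_connectedComponentIn hyT
      have hDclosedsub : closure D ⊆ D := by
        rw [hDdef]
        exact (isPreconnected_connectedComponentIn.closure).subset_connectedComponentIn
          (subset_closure hyD) (closure_minimal hDsub hTclosed)
      have hDcomp : IsCompact D := by
        refine Metric.isCompact_of_isClosed_isBounded (isClosed_of_closure_subset hDclosedsub) ?_
        exact (Metric.isBounded_closedBall (x := (0 : EuclideanSpace ℝ (Fin n)))
          (r := R)).subset (fun x hx => (hDsub hx).2)
      obtain ⟨u, huD, humin⟩ := hDcomp.exists_isMinOn ⟨y, hyD⟩ continuous_norm.continuousOn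
      by_cases hu0 : u = 0
      · exact hu0 ▸ huD
      · exfalso
        obtain ⟨⟨l, hl⟩, hball⟩ := hDsub huD
        have huR : ‖u‖ ≤ R := by simpa [mem_closedBall, dist_eq_norm] using hball
        obtain ⟨S, v, hSpre, huS, hvS, hSprop, hvlt, _⟩ :=
          aux_arc hcond hl hu0 (lt_of_le_of_lt huR hRlt)
        have hSsub : S ⊆ T := by
          intro x hx
          refine ⟨(hSprop x hx).1, ?_⟩
          simp only [mem_closedBall, dist_eq_norm, sub_zero]
          linarith [(hSprop x hx).2.1]
        have hSD : S ⊆ D := by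
          rw [hDdef, connectedComponentIn_eq (show u ∈ connectedComponentIn T y from huD)]
          exact hSpre.subset_connectedComponentIn huS hSsub
        exact absurd (isMinOn_iff.mp humin v (hSD hvS)) (not_le.mpr hvlt)
    exact ⟨connectedComponentIn T y, connectedComponentIn_subset _ _, h0D,
      mem_connectedComponentIn hyT, isPreconnected_connectedComponentIn⟩
  exact ⟨hset, hR, hiso, hconn, hset⟩

end Aux

/-- If `sR > 0` satisfies Condition 1, `0 < R < sR`, and `R` is an isolation radius of
`0`, then `Γ_ℝ(f) ∩ f⁻¹(0) ∩ B_R = {0}`; consequently `R` is a faithful radius of `0`. -/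
theorem stmt11 (n : ℕ) (f : MvPolynomial (Fin n) ℝ)
    (hf0 : evalP f 0 = 0) (hgrad : grad f 0 = 0)
    (sR : ℝ) (hsR : 0 < sR) (hcond : Cond1 f sR) (R : ℝ) (hR : 0 < R) (hRlt : R < sR)
    (hiso : Crit f ∩ closedBall (0 : EuclideanSpace ℝ (Fin n)) R = {0}) :
    Gamma f ∩ {x | evalP f x = 0} ∩ closedBall (0 : EuclideanSpace ℝ (Fin n)) R = {0} ∧
    IsFaithfulRadius f R := by
  obtain ⟨h1, h2⟩ := stmt11' f hf0 hgrad sR hsR hcond R hR hRlt hiso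
  exact ⟨h1, h2⟩
end
end

section
/- Let f, g, h ∈ ℝ[X₁,…,Xₙ] with f = g·h², h not the zero polynomial, and suppose f(0) = 0 and ∇f(0) = 0. If g(0) = 0 and ∇g(0) ≠ 0, then 0 is a saddle point of f: every neighborhood of 0 in ℝⁿ contains points u and v with f(u) < 0 < f(v). -/
open MvPolynomial Metric Set

noncomputable section

lemma analytic_evalP {n : ℕ} (p : MvPolynomial (Fin n) ℝ) :
    AnalyticOnNhd ℝ (evalP p) Set.univ := by
  have := AnalyticOnNhd.eval_continuousLinearMap (𝕜 := ℝ)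
    ((PiLp.continuousLinearEquiv 2 ℝ (fun _ : Fin n => ℝ)) :
      EuclideanSpace ℝ (Fin n) →L[ℝ] (Fin n → ℝ)) p
  exact this

lemma continuous_evalP {n : ℕ} (p : MvPolynomial (Fin n) ℝ) :
    Continuous (evalP p) := by
  rw [← continuousOn_univ]
  exact (analytic_evalP p).continuousOn

lemma exists_ne_zero_on_open {n : ℕ} {p : MvPolynomial (Fin n) ℝ} (hp : p ≠ 0)
    {V : Set (EuclideanSpace ℝ (Fin n))} (hV : IsOpen V) (hne : V.Nonempty) :
    ∃ x ∈ V, evalP p x ≠ 0 := by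
  by_contra hcon
  push_neg at hcon
  obtain ⟨z₀, hz₀⟩ := hne
  have heq : EqOn (evalP p) 0 univ :=
    (analytic_evalP p).eqOn_zero_of_preconnected_of_eventuallyEq_zero
      isPreconnected_univ (mem_univ z₀)
      (Filter.eventually_of_mem (hV.mem_nhds hz₀) hcon)
  apply hp
  apply MvPolynomial.funext
  intro x
  have := heq (mem_univ ((WithLp.equiv 2 (Fin n → ℝ)).symm x))
  simpa [evalP] using this

lemma derivative_aeval_single {n : ℕ} (i : Fin n) (g : MvPolynomial (Fin n) ℝ) :
    Polynomial.derivative (aeval (fun j => if j = i then Polynomial.X else 0 : Fin n → Polynomial ℝ) g)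
      = aeval (fun j => if j = i then Polynomial.X else 0 : Fin n → Polynomial ℝ) (pderiv i g) := by
  induction g using MvPolynomial.induction_on with
  | C a => simp
  | add p q hp hq => simp [hp, hq]
  | mul_X p j hp =>
      by_cases hji : j = i
      · subst hji
        simp [Polynomial.derivative_mul, hp, mul_comm, pderiv_mul]
      · simp [hji, pderiv_mul, hp, Pi.single_eq_of_ne (Ne.symm hji)]

lemma eval_aeval_single {n : ℕ} (i : Fin n) (g : MvPolynomial (Fin n) ℝ) (t : ℝ) :
    Polynomial.eval t (aeval (fun j => if j = i then Polynomial.X else 0 : Fin n → Polynomial ℝ) g)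
      = eval (fun j => if j = i then t else 0) g := by
  induction g using MvPolynomial.induction_on with
  | C a => simp
  | add p q hp hq => simp [hp, hq]
  | mul_X p j hp => by_cases hji : j = i <;> simp [hji, hp]

/-- Suppose `f = g·h²` with `h` not the zero polynomial, `f(0) = 0` and `∇f(0) = 0`.
If `g(0) = 0` and `∇g(0) ≠ 0`, then `0` is a saddle point of `f`: every neighborhood of
`0` contains points `u` and `v` with `f(u) < 0 < f(v)`. -/
theorem stmt18 (n : ℕ) (f g h : MvPolynomial (Fin n) ℝ) (hfgh : f = g * h ^ 2)
    (hh : h ≠ 0) (hf0 : evalP f 0 = 0) (hgrad : grad f 0 = 0)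
    (hg0 : evalP g 0 = 0) (hgradg : grad g 0 ≠ 0) :
    ∀ U ∈ nhds (0 : EuclideanSpace ℝ (Fin n)),
      ∃ u ∈ U, ∃ v ∈ U, evalP f u < 0 ∧ 0 < evalP f v := by
  intro U hU
  obtain ⟨δ, hδpos, hδU⟩ := Metric.mem_nhds_iff.1 hU
  -- pick a coordinate where the gradient of g is nonzero
  obtain ⟨i, hi⟩ : ∃ i, eval (fun j => (0 : EuclideanSpace ℝ (Fin n)) j) (pderiv i g) ≠ 0 := by
    by_contra hcon
    push_neg at hcon
    exact hgradg (by ext j; simpa [grad] using hcon j)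
  set q : Polynomial ℝ :=
    aeval (fun j => if j = i then Polynomial.X else 0 : Fin n → Polynomial ℝ) g with hq
  have hq0 : q.eval 0 = 0 := by
    have := eval_aeval_single i g 0
    rw [hq, this]
    have h0 : (fun j => if j = i then (0:ℝ) else 0) = fun j => (0 : EuclideanSpace ℝ (Fin n)) j := by
      funext j; simp
    rw [h0]
    exact hg0
  set c : ℝ := q.derivative.eval 0 with hc
  have hcne : c ≠ 0 := by
    rw [hc, hq, derivative_aeval_single, eval_aeval_single]
    have h0 : (fun j => if j = i then (0:ℝ) else 0) = fun j => (0 : EuclideanSpace ℝ (Fin n)) j := by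
      funext j; simp
    rw [h0]; exact hi
  have hderiv : HasDerivAt (fun t => q.eval t) c 0 := Polynomial.hasDerivAt q 0
  have hslope := hasDerivAt_iff_tendsto_slope.1 hderiv
  have hball : Metric.ball c |c| ∈ nhds c := Metric.ball_mem_nhds c (abs_pos.2 hcne)
  have hev : {t : ℝ | slope (fun t => q.eval t) 0 t ∈ Metric.ball c |c|} ∈
      nhdsWithin (0:ℝ) {(0:ℝ)}ᶜ := hslope hball
  obtain ⟨ε, hεpos, hεsub⟩ := Metric.mem_nhdsWithin_iff.1 hev
  set t : ℝ := min δ ε / 2 with ht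
  have htpos : 0 < t := by positivity
  have htδ : t < δ := by
    have := min_le_left δ ε; simp only [ht]; linarith
  have htε : t < ε := by
    have := min_le_right δ ε; simp only [ht]; linarith
  -- sign of q.eval at ±t
  have hsign : ∀ s : ℝ, s ≠ 0 → |s| < ε → q.eval s = s * slope (fun t => q.eval t) 0 s ∧
      slope (fun t => q.eval t) 0 s ∈ Metric.ball c |c| := by
    intro s hs hsε
    constructor
    · rw [slope_def_field]
      field_simp [hq0]
      rw [hq0]; ring
    · apply hεsub
      constructor
      · simpa [Real.dist_eq] using hsε
      · simpa using hs
  have habs : ∀ s : ℝ, s ∈ Metric.ball c |c| → (0 < c → 0 < s) ∧ (c < 0 → s < 0) := by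
    intro s hs
    rw [Metric.mem_ball, Real.dist_eq] at hs
    constructor
    · intro hcpos; rw [abs_of_pos hcpos] at hs; cases abs_lt.1 hs; linarith
    · intro hcneg; rw [abs_of_neg hcneg] at hs; cases abs_lt.1 hs; linarith
  -- evaluate g at points on the i-axis
  have hgs : ∀ s : ℝ, evalP g (EuclideanSpace.single i s) = q.eval s := by
    intro s
    rw [hq, eval_aeval_single]
    unfold evalP
    congr 2
    funext j
    simp [EuclideanSpace.single_apply, evalP]
  -- get points with g negative and g positive in the ball
  have key : ∃ u' v' : EuclideanSpace ℝ (Fin n), ‖u'‖ < δ ∧ ‖v'‖ < δ ∧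
      evalP g u' < 0 ∧ 0 < evalP g v' := by
    have hnt : ‖EuclideanSpace.single i t‖ < δ := by
      rw [EuclideanSpace.norm_single]; rw [Real.norm_eq_abs, abs_of_pos htpos]; exact htδ
    have hnt' : ‖EuclideanSpace.single i (-t)‖ < δ := by
      rw [EuclideanSpace.norm_single]; rw [Real.norm_eq_abs, abs_neg, abs_of_pos htpos]; exact htδ
    obtain ⟨he1, he2⟩ := hsign t (ne_of_gt htpos) (by rwa [abs_of_pos htpos])
    obtain ⟨hf1, hf2⟩ := hsign (-t) (by simp [ne_of_gt htpos]) (by rwa [abs_neg, abs_of_pos htpos])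
    rcases lt_or_gt_of_ne hcne with hneg | hpos
    · refine ⟨EuclideanSpace.single i t, EuclideanSpace.single i (-t), hnt, hnt', ?_, ?_⟩
      · rw [hgs, he1]
        have := (habs _ he2).2 hneg
        exact mul_neg_of_pos_of_neg htpos this
      · rw [hgs, hf1]
        have := (habs _ hf2).2 hneg
        exact mul_pos_of_neg_of_neg (by linarith) this
    · refine ⟨EuclideanSpace.single i (-t), EuclideanSpace.single i t, hnt', hnt, ?_, ?_⟩
      · rw [hgs, hf1]
        have := (habs _ hf2).1 hpos
        exact mul_neg_of_neg_of_pos (by linarith) this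
      · rw [hgs, he1]
        exact mul_pos htpos ((habs _ he2).1 hpos)
  obtain ⟨u', v', hu'δ, hv'δ, hu'g, hv'g⟩ := key
  -- now perturb inside the open sets to make h nonzero
  have hfval : ∀ x, evalP f x = evalP g x * (evalP h x) ^ 2 := by
    intro x; simp [evalP, hfgh]
  have step : ∀ (w : EuclideanSpace ℝ (Fin n)), ‖w‖ < δ →
      ∀ (P : ℝ → Prop), (P (evalP g w)) → (IsOpen {y : ℝ | P y}) →
      ∃ x ∈ U, P (evalP g x) ∧ evalP h x ≠ 0 := by
    intro w hwδ P hPw hPopen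
    set V : Set (EuclideanSpace ℝ (Fin n)) :=
      {x | P (evalP g x)} ∩ Metric.ball 0 δ with hV
    have hVopen : IsOpen V :=
      ((hPopen.preimage (continuous_evalP g)).inter Metric.isOpen_ball)
    have hVne : V.Nonempty := ⟨w, hPw, by simpa [Metric.mem_ball, dist_zero_right] using hwδ⟩
    obtain ⟨x, hxV, hxh⟩ := exists_ne_zero_on_open hh hVopen hVne
    exact ⟨x, hδU hxV.2, hxV.1, hxh⟩
  obtain ⟨u, huU, huP, huh⟩ := step u' hu'δ (fun y => y < 0) hu'g isOpen_Iio
  obtain ⟨v, hvU, hvP, hvh⟩ := step v' hv'δ (fun y => 0 < y) hv'g isOpen_Ioi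
  refine ⟨u, huU, v, hvU, ?_, ?_⟩
  · rw [hfval]
    exact mul_neg_of_neg_of_pos huP (lt_of_le_of_ne (sq_nonneg _) (Ne.symm (pow_ne_zero 2 huh)))
  · rw [hfval]
    exact mul_pos hvP (lt_of_le_of_ne (sq_nonneg _) (Ne.symm (pow_ne_zero 2 hvh)))
end
end
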